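/- Let F be an automorphism of P(ω)/Fin, let A ⊆ ℕ be infinite, let A' be a representative of F([A]), and let h be a bijection between a cofinite subset of A and a cofinite subset of A'. If the restriction of F to P(A)/Fin is not induced by h — that is, if it is not the case that F([X]) = [h[X ∩ dom(h)]] for every X ⊆ A — then there exists an infinite B ⊆ A such that F(B) ∩ h[B ∩ dom(h)] is finite, where F(B) denotes any representative of F([B]). -/

import Mathlib

open Set

/-- The first uncountable ordinal `ω₁`. -/
noncomputable def omega1 : Ordinal := (Cardinal.aleph 1).ord

/-- `A =* B` : the symmetric difference `(A \ B) ∪ (B \ A)` is finite. -/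
def EqStar (A B : Set ℕ) : Prop := ((A \ B) ∪ (B \ A)).Finite

/-- `A ⊆* B` : `A \ B` is finite. -/
def SubStar (A B : Set ℕ) : Prop := (A \ B).Finite

/-- An automorphism of the Boolean algebra `P(ω)/Fin`, represented by a lifting
`Φ : Set ℕ → Set ℕ` acting on representatives: `Φ` is well defined, injective
and surjective modulo finite sets, and preserves the Boolean operations modulo
finite sets. -/
structure PωFinAuto where
  /-- the action on representatives -/
  Φ : Set ℕ → Set ℕ
  /-- well-definedness on `=*`-classes -/
  congr : ∀ A B : Set ℕ, EqStar A B → EqStar (Φ A) (Φ B)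
  /-- injectivity on `=*`-classes -/
  inj : ∀ A B : Set ℕ, EqStar (Φ A) (Φ B) → EqStar A B
  /-- surjectivity on `=*`-classes -/
  surj : ∀ B : Set ℕ, ∃ A : Set ℕ, EqStar (Φ A) B
  /-- preservation of unions -/
  map_union : ∀ A B : Set ℕ, EqStar (Φ (A ∪ B)) (Φ A ∪ Φ B)
  /-- preservation of complements -/
  map_compl : ∀ A : Set ℕ, EqStar (Φ Aᶜ) (Φ A)ᶜ

/-- A map on representatives induces a *trivial* automorphism of `P(ω)/Fin` if
there is an almost permutation `h` of `ℕ` (an injection on a cofinite set `dom`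
whose image is cofinite) with `Φ A =* h[A ∩ dom]` for all `A`. -/
def IsTrivial (Φ : Set ℕ → Set ℕ) : Prop :=
  ∃ (h : ℕ → ℕ) (dom : Set ℕ), (domᶜ : Set ℕ).Finite ∧
    ((h '' dom)ᶜ : Set ℕ).Finite ∧ Set.InjOn h dom ∧
    ∀ A : Set ℕ, EqStar (Φ A) (h '' (A ∩ dom))

lemma eqStar_iff {A B : Set ℕ} : EqStar A B ↔ (A \ B).Finite ∧ (B \ A).Finite :=
  Set.finite_union

lemma eqStar_refl (A : Set ℕ) : EqStar A A := by simp [EqStar]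

lemma EqStar.symm {A B : Set ℕ} (h : EqStar A B) : EqStar B A := by
  unfold EqStar at *; rwa [Set.union_comm]

lemma EqStar.trans {A B C : Set ℕ} (h1 : EqStar A B) (h2 : EqStar B C) : EqStar A C := by
  rw [eqStar_iff] at *
  constructor
  · exact ((h1.1.union h2.1).subset (fun x hx => by
      by_cases hB : x ∈ B
      · exact Or.inr ⟨hB, hx.2⟩
      · exact Or.inl ⟨hx.1, hB⟩))
  · exact ((h2.2.union h1.2).subset (fun x hx => by
      by_cases hB : x ∈ B
      · exact Or.inr ⟨hB, hx.2⟩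
      · exact Or.inl ⟨hx.1, hB⟩))

lemma EqStar.finite {A B : Set ℕ} (h : EqStar A B) (hA : A.Finite) : B.Finite :=
  (hA.union ((eqStar_iff.mp h).2)).subset (fun x hx => by
    by_cases hxA : x ∈ A
    · exact Or.inl hxA
    · exact Or.inr ⟨hx, hxA⟩)

lemma eqStar_compl {A B : Set ℕ} (h : EqStar A B) : EqStar Aᶜ Bᶜ := by
  unfold EqStar at *
  have : Aᶜ \ Bᶜ ∪ Bᶜ \ Aᶜ = A \ B ∪ B \ A := by
    ext x; simp [mem_diff]; tauto
  rwa [this]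

lemma eqStar_inter {A B C D : Set ℕ} (h1 : EqStar A B) (h2 : EqStar C D) :
    EqStar (A ∩ C) (B ∩ D) := by
  rw [eqStar_iff] at *
  constructor
  · exact (h1.1.union h2.1).subset (fun x hx => by
      rcases hx with ⟨⟨hA, hC⟩, hnot⟩
      simp only [mem_inter_iff, not_and] at hnot
      by_cases hB : x ∈ B
      · exact Or.inr ⟨hC, hnot hB⟩
      · exact Or.inl ⟨hA, hB⟩)
  · exact (h1.2.union h2.2).subset (fun x hx => by
      rcases hx with ⟨⟨hB, hD⟩, hnot⟩
      simp only [mem_inter_iff, not_and] at hnot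
      by_cases hAx : x ∈ A
      · exact Or.inr ⟨hD, hnot hAx⟩
      · exact Or.inl ⟨hB, hAx⟩)

lemma eqStar_union {A B C D : Set ℕ} (h1 : EqStar A B) (h2 : EqStar C D) :
    EqStar (A ∪ C) (B ∪ D) := by
  rw [eqStar_iff] at *
  constructor
  · exact (h1.1.union h2.1).subset (fun x hx => by
      rcases hx with ⟨hA | hC, hnot⟩
      · exact Or.inl ⟨hA, fun hB => hnot (Or.inl hB)⟩
      · exact Or.inr ⟨hC, fun hD => hnot (Or.inr hD)⟩)
  · exact (h1.2.union h2.2).subset (fun x hx => by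
      rcases hx with ⟨hB | hD, hnot⟩
      · exact Or.inl ⟨hB, fun hA => hnot (Or.inl hA)⟩
      · exact Or.inr ⟨hD, fun hC => hnot (Or.inr hC)⟩)

lemma PωFinAuto.map_inter (F : PωFinAuto) (X Y : Set ℕ) :
    EqStar (F.Φ (X ∩ Y)) (F.Φ X ∩ F.Φ Y) := by
  have h1 : X ∩ Y = (Xᶜ ∪ Yᶜ)ᶜ := by rw [Set.compl_union, compl_compl, compl_compl]
  have h2 : EqStar (F.Φ ((Xᶜ ∪ Yᶜ)ᶜ)) (F.Φ (Xᶜ ∪ Yᶜ))ᶜ := F.map_compl _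
  have h3 : EqStar (F.Φ (Xᶜ ∪ Yᶜ)) (F.Φ Xᶜ ∪ F.Φ Yᶜ) := F.map_union _ _
  have h4 : EqStar (F.Φ Xᶜ ∪ F.Φ Yᶜ) ((F.Φ X)ᶜ ∪ (F.Φ Y)ᶜ) :=
    eqStar_union (F.map_compl X) (F.map_compl Y)
  have h5 := eqStar_compl (h3.trans h4)
  rw [h1]
  refine h2.trans (h5.trans ?_)
  rw [Set.compl_union, compl_compl, compl_compl]
  exact eqStar_refl _

lemma PωFinAuto.phi_empty_finite (F : PωFinAuto) : (F.Φ ∅).Finite := by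
  have h1 := F.map_inter ∅ ∅ᶜ
  rw [Set.inter_compl_self] at h1
  have h2 : EqStar (F.Φ ∅ ∩ F.Φ ∅ᶜ) (F.Φ ∅ ∩ (F.Φ ∅)ᶜ) :=
    eqStar_inter (eqStar_refl _) (F.map_compl ∅)
  have h3 := h1.trans h2
  rw [Set.inter_compl_self] at h3
  exact h3.symm.finite Set.finite_empty

lemma PωFinAuto.phi_finite (F : PωFinAuto) {B : Set ℕ} (hB : B.Finite) :
    (F.Φ B).Finite := by
  have he : EqStar B ∅ := by simpa [EqStar] using hB
  exact ((F.congr B ∅ he).symm).finite F.phi_empty_finite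

/-- if `F` is an automorphism of `P(ω)/Fin`, `A` is infinite,
`A'` represents `F([A])`, and `h` is a bijection between a cofinite subset
`dom` of `A` and a cofinite subset of `A'` which does not induce the
restriction of `F` to `P(A)/Fin`, then there is an infinite `B ⊆ A` with
`F(B) ∩ h[B]` finite. -/
theorem exists_set_where_not_induced (F : PωFinAuto) (A : Set ℕ)
    (hA : A.Infinite) (A' : Set ℕ) (hA' : EqStar (F.Φ A) A')
    (h : ℕ → ℕ) (dom : Set ℕ) (hdomA : dom ⊆ A) (hdomCof : (A \ dom).Finite)
    (hinj : Set.InjOn h dom) (hrange : h '' dom ⊆ A')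
    (hrangeCof : (A' \ h '' dom).Finite)
    (hnot : ¬ ∀ X : Set ℕ, X ⊆ A → EqStar (F.Φ X) (h '' (X ∩ dom))) :
    ∃ B : Set ℕ, B ⊆ A ∧ B.Infinite ∧ (F.Φ B ∩ h '' (B ∩ dom)).Finite := by
  push_neg at hnot
  obtain ⟨X, hXA, hne⟩ := hnot
  have key : ∀ C D : Set ℕ, C ⊆ A → D.Infinite → (D \ F.Φ C).Finite →
      (D ∩ h '' (C ∩ dom)).Finite →
      ∃ B : Set ℕ, B ⊆ A ∧ B.Infinite ∧ (F.Φ B ∩ h '' (B ∩ dom)).Finite := by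
    intro C D hCA hDinf hDsub hDdisj
    obtain ⟨W, hW⟩ := F.surj D
    have h1 : EqStar (F.Φ (W ∩ C)) (D ∩ F.Φ C) :=
      (F.map_inter W C).trans (eqStar_inter hW (eqStar_refl _))
    have h2 : EqStar (D ∩ F.Φ C) D := by
      rw [eqStar_iff]
      refine ⟨Set.Finite.subset Set.finite_empty ?_, hDsub.subset ?_⟩
      · intro x hx; exact absurd hx.1.1 hx.2
      · intro x hx; exact ⟨hx.1, fun hc => hx.2 ⟨hx.1, hc⟩⟩
    have hFBD : EqStar (F.Φ (W ∩ C)) D := h1.trans h2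
    refine ⟨W ∩ C, fun x hx => hCA hx.2, ?_, ?_⟩
    · intro hfin
      exact hDinf (hFBD.finite (F.phi_finite hfin))
    · refine (hDdisj.union (eqStar_iff.mp hFBD).1).subset ?_
      rintro x ⟨hx1, hx2⟩
      by_cases hxD : x ∈ D
      · exact Or.inl ⟨hxD, Set.image_mono (f := h)
          (Set.inter_subset_inter_left dom Set.inter_subset_right) hx2⟩
      · exact Or.inr ⟨hx1, hxD⟩
  rw [eqStar_iff, not_and_or] at hne
  rcases hne with hne | hne
  · refine key X (F.Φ X \ h '' (X ∩ dom)) hXA hne ?_ ?_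
    · exact Set.Finite.subset Set.finite_empty (fun x hx => absurd hx.1.1 hx.2)
    · exact Set.Finite.subset Set.finite_empty (fun x hx => absurd hx.2 hx.1.2)
  · set D := h '' (X ∩ dom) \ F.Φ X with hD
    have hEq : EqStar (F.Φ (A \ X)) (A' ∩ (F.Φ X)ᶜ) := by
      rw [Set.diff_eq]
      exact (F.map_inter A Xᶜ).trans (eqStar_inter hA' (F.map_compl X))
    refine key (A \ X) D Set.diff_subset hne ?_ ?_
    · refine ((eqStar_iff.mp hEq).2).subset ?_
      rintro x ⟨hx1, hx2⟩
      refine ⟨⟨hrange (Set.image_mono (f := h) Set.inter_subset_right hx1.1), hx1.2⟩, hx2⟩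
    · have hdisj : D ∩ h '' ((A \ X) ∩ dom) = ∅ := by
        ext y
        simp only [Set.mem_inter_iff, Set.mem_empty_iff_false, iff_false, not_and]
        intro hy1 hy2
        obtain ⟨x1, hx1, rfl⟩ := hy1.1
        obtain ⟨x2, hx2, heq⟩ := hy2
        have := hinj hx2.2 hx1.2 heq
        exact hx2.1.2 (this ▸ hx1.1)
      rw [hdisj]; exact Set.finite_empty
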